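/- Let R = M_n(F), char F ≠ 2 and char F not dividing n, with an involution * and a G-grading R = ⊕_g R̃_g satisfying (R̃_g)* ⊆ R̃_g, G finite abelian, h ∈ G of order 2. Define, for L = sl(n): L_g = R̃_g^(−) ⊕ R̃_{gh}^(+) for g ≠ h, and L_h = R̃_h^(−) ⊕ (R̃_e^(+) ∩ L). Then L = ⊕_{g∈G} L_g and [L_g, L_{g'}] ⊆ L_{gg'}, i.e. this is a G-grading of the Lie algebra sl(n). -/

import Mathlib

open Matrix in
theorem tracelike_eq {F : Type*} [Field F] {n : ℕ} (hn : (n : F) ≠ 0)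
    (τ : Matrix (Fin n) (Fin n) F →ₗ[F] F)
    (hc : ∀ X Y, τ (X * Y) = τ (Y * X)) (h1 : τ 1 = n) (X : Matrix (Fin n) (Fin n) F) :
    τ X = Matrix.trace X := by
  have hone : (1 : Matrix (Fin n) (Fin n) F) = ∑ j : Fin n, Matrix.single j j 1 := by
    ext a b
    rw [Matrix.sum_apply]
    by_cases hab : a = b
    · subst hab
      rw [Matrix.one_apply_eq, Finset.sum_eq_single a]
      · simp [Matrix.single]
      · intro x _ hx; simp [Matrix.single, Matrix.of_apply, hx]
      · simp
    · rw [Matrix.one_apply_ne hab]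
      refine (Finset.sum_eq_zero fun x _ => ?_).symm
      simp only [Matrix.single, Matrix.of_apply]
      rw [if_neg]
      rintro ⟨rfl, rfl⟩
      exact hab rfl
  have hdiag : ∀ i : Fin n, τ (Matrix.single i i 1) = 1 := by
    intro i
    have hall : ∀ j : Fin n, τ (Matrix.single j j 1) = τ (Matrix.single i i 1) := by
      intro j
      have := hc (Matrix.single j i 1) (Matrix.single i j 1)
      rwa [Matrix.single_mul_single_same, Matrix.single_mul_single_same, one_mul] at this
    have hsum : (n : F) * τ (Matrix.single i i 1) = (n : F) := by
      calc (n : F) * τ (Matrix.single i i 1) = ∑ j : Fin n, τ (Matrix.single j j 1) := by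
            simp [hall, Finset.sum_const, nsmul_eq_mul]
        _ = τ 1 := by rw [hone, map_sum]
        _ = n := h1
    field_simp at hsum
    exact hsum
  have hoff : ∀ i j : Fin n, i ≠ j → τ (Matrix.single i j 1) = 0 := by
    intro i j hij
    have := hc (Matrix.single i i 1) (Matrix.single i j 1)
    rw [Matrix.single_mul_single_same, one_mul,
      Matrix.single_mul_single_of_ne (h := Ne.symm hij), map_zero] at this
    exact this
  have hX := Matrix.matrix_eq_sum_single X
  calc τ X = ∑ i : Fin n, ∑ j : Fin n, X i j * τ (Matrix.single i j 1) := by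
        conv_lhs => rw [hX]
        rw [map_sum]
        refine Finset.sum_congr rfl fun i _ => ?_
        rw [map_sum]
        refine Finset.sum_congr rfl fun j _ => ?_
        rw [← smul_eq_mul, ← _root_.map_smul, Matrix.smul_single, smul_eq_mul, mul_one]
    _ = ∑ i : Fin n, X i i := by
        refine Finset.sum_congr rfl fun i _ => ?_
        rw [Finset.sum_eq_single i]
        · rw [hdiag, mul_one]
        · intro b _ hb; rw [hoff i b (Ne.symm hb), mul_zero]
        · simp
    _ = Matrix.trace X := rfl


open scoped DirectSum

/-- Type II gradings of `sl(n)`: Let `R = M_n(F)`, `char F ≠ 2`,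
`char F ∤ n`, with a linear involution `s` and an involution `G`-grading `R = ⊕ R̃_g`
(`G` finite abelian, `h ∈ G` of order 2). Setting
`L_g = R̃_g⁽⁻⁾ ⊕ R̃_{gh}⁽⁺⁾` for `g ≠ h` and `L_h = R̃_h⁽⁻⁾ ⊕ (R̃_e⁽⁺⁾ ∩ sl(n))`
yields a `G`-grading of the Lie algebra `sl(n)`. -/
theorem typeII_grading_of_sl
    {F : Type*} [Field F] (h2 : (2 : F) ≠ 0) {n : ℕ} (hn : (n : F) ≠ 0)
    {G : Type*} [CommGroup G] [Fintype G] [DecidableEq G]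
    (s : Matrix (Fin n) (Fin n) F →ₗ[F] Matrix (Fin n) (Fin n) F)
    (hanti : ∀ X Y, s (X * Y) = s Y * s X) (hinv : ∀ X, s (s X) = X)
    (h : G) (hh1 : h ≠ 1) (hh2 : h * h = 1)
    (Rt : G → Submodule F (Matrix (Fin n) (Fin n) F))
    (hdec : DirectSum.IsInternal Rt)
    (hmul : ∀ g g' : G, ∀ x ∈ Rt g, ∀ y ∈ Rt g', x * y ∈ Rt (g * g'))
    (hstar : ∀ g : G, ∀ x ∈ Rt g, s x ∈ Rt g) :
    let sl : Submodule F (Matrix (Fin n) (Fin n) F) :=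
      LinearMap.ker (Matrix.traceLinearMap (Fin n) F F)
    let Lg : G → Submodule F (Matrix (Fin n) (Fin n) F) := fun g =>
      (Rt g ⊓ LinearMap.ker (s + LinearMap.id)) ⊔
        (Rt (g * h) ⊓ LinearMap.ker (s - LinearMap.id) ⊓ (if g = h then sl else ⊤))
    (sl = ⨆ g : G, Lg g) ∧
    (∀ g : G, Disjoint (Lg g) (⨆ g' ∈ {x : G | x ≠ g}, Lg g')) ∧
    (∀ g g' : G, ∀ x ∈ Lg g, ∀ y ∈ Lg g', x * y - y * x ∈ Lg (g * g')) := by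
  classical
  intro sl Lg
  let e : (⨁ g : G, (Rt g : Submodule F (Matrix (Fin n) (Fin n) F))) ≃ₗ[F]
      Matrix (Fin n) (Fin n) F :=
    LinearEquiv.ofBijective (DirectSum.coeLinearMap Rt) hdec
  let p : G → (Matrix (Fin n) (Fin n) F →ₗ[F] Matrix (Fin n) (Fin n) F) := fun g =>
    (Rt g).subtype ∘ₗ (DirectSum.component F G (fun g => (Rt g : Submodule F _)) g) ∘ₗ
      (e.symm : Matrix (Fin n) (Fin n) F →ₗ[F] _)
  have p_apply : ∀ (g : G) x, p g x = ((e.symm x) g : Matrix (Fin n) (Fin n) F) :=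
    fun g x => rfl
  have p_mem : ∀ (g : G) x, p g x ∈ Rt g := fun g x => ((e.symm x) g).2
  have p_same : ∀ (g : G) x, x ∈ Rt g → p g x = x := by
    intro g x hx
    rw [p_apply, hdec.ofBijective_coeLinearMap_of_mem hx]
  have p_ne : ∀ (g g' : G), g ≠ g' → ∀ x, x ∈ Rt g → p g' x = 0 := by
    intro g g' hgg' x hx
    rw [p_apply, hdec.ofBijective_coeLinearMap_of_mem_ne hgg' hx]
    rfl
  have p_sum : ∀ x, ∑ g : G, p g x = x := by
    intro x
    calc ∑ g : G, p g x
        = DirectSum.coeLinearMap Rt (∑ g : G,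
            DirectSum.of (fun g => (Rt g : Submodule F _)) g ((e.symm x) g)) := by
          rw [map_sum]
          exact Finset.sum_congr rfl fun g _ => by rw [DirectSum.coeLinearMap_of, p_apply]
      _ = DirectSum.coeLinearMap Rt (e.symm x) := by rw [DirectSum.sum_univ_of]
      _ = x := e.apply_symm_apply x
  have one_mem : (1 : Matrix (Fin n) (Fin n) F) ∈ Rt 1 := by
    have key : ∀ (g : G) x, x ∈ Rt g → x * p 1 1 = x := by
      intro g x hx
      have hstep : x = ∑ g' : G, p g (x * p g' 1) := by
        calc x = p g x := (p_same g x hx).symm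
          _ = p g (∑ g' : G, x * p g' 1) := by rw [← Finset.mul_sum, p_sum, mul_one]
          _ = ∑ g' : G, p g (x * p g' 1) := map_sum _ _ _
      rw [Finset.sum_eq_single 1 ?_ ?_] at hstep
      · have heq : p g (x * p 1 1) = x * p 1 1 :=
          p_same g _ (by simpa using hmul g 1 x hx _ (p_mem 1 1))
        exact (hstep.trans heq).symm
      · intro b _ hb
        exact p_ne (g * b) g (fun hgb => hb (by rwa [mul_eq_left] at hgb)) _
          (hmul g b x hx _ (p_mem b 1))
      · simp
    have h1 : ∑ g : G, p g 1 * p 1 1 = 1 := by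
      rw [Finset.sum_congr rfl fun g _ => key g (p g 1) (p_mem g 1)]
      exact p_sum 1
    have h1' : ∑ g : G, p g 1 * p 1 1 = p 1 1 := by
      rw [← Finset.sum_mul, p_sum, one_mul]
    exact (h1'.symm.trans h1) ▸ p_mem 1 1
  have s_one : s (1 : Matrix (Fin n) (Fin n) F) = 1 := by
    have hs := hanti (s 1) 1
    rw [mul_one, hinv, mul_one] at hs
    exact hs.symm
  have trace_n : Matrix.trace (1 : Matrix (Fin n) (Fin n) F) = (n : F) := by
    simp [Matrix.trace_one]
  have trace_s : ∀ X, Matrix.trace (s X) = Matrix.trace X := by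
    intro X
    have := tracelike_eq hn ((Matrix.traceLinearMap (Fin n) F F) ∘ₗ s) ?_ ?_ X
    · simpa [Matrix.traceLinearMap] using this
    · intro A B
      simp only [LinearMap.comp_apply, Matrix.traceLinearMap, LinearMap.coe_mk,
        AddHom.coe_mk, hanti]
      exact Matrix.trace_mul_comm _ _
    · simp only [LinearMap.comp_apply, s_one]
      simpa [Matrix.traceLinearMap] using trace_n
  have p1_mul : ∀ X Y, p 1 (X * Y) = ∑ g : G, p g X * p g⁻¹ Y := by
    intro X Y
    have hXY : X * Y = ∑ g : G, ∑ g' : G, p g X * p g' Y := by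
      conv_lhs => rw [← p_sum X, ← p_sum Y]
      rw [Finset.sum_mul_sum]
    rw [hXY, map_sum]
    refine Finset.sum_congr rfl fun g _ => ?_
    rw [map_sum, Finset.sum_eq_single g⁻¹ ?_ ?_]
    · exact p_same 1 _ (by simpa using hmul g g⁻¹ _ (p_mem g X) _ (p_mem g⁻¹ Y))
    · intro b _ hb
      exact p_ne (g * b) 1 (fun hgb => hb (eq_inv_of_mul_eq_one_right hgb)) _
        (hmul g b _ (p_mem g X) _ (p_mem b Y))
    · simp
  have trace_p1 : ∀ X, Matrix.trace (p 1 X) = Matrix.trace X := by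
    intro X
    have := tracelike_eq hn ((Matrix.traceLinearMap (Fin n) F F) ∘ₗ p 1) ?_ ?_ X
    · simpa [Matrix.traceLinearMap] using this
    · intro A B
      simp only [LinearMap.comp_apply, Matrix.traceLinearMap, LinearMap.coe_mk,
        AddHom.coe_mk]
      rw [p1_mul, p1_mul, Matrix.trace_sum, Matrix.trace_sum]
      exact Fintype.sum_equiv (Equiv.inv G) _ _ fun g => by
        rw [Equiv.inv_apply, inv_inv]; exact Matrix.trace_mul_comm _ _
    · simp only [LinearMap.comp_apply]
      rw [p_same 1 1 one_mem]
      simpa [Matrix.traceLinearMap] using trace_n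
  have trace_zero : ∀ (g : G), g ≠ 1 → ∀ x ∈ Rt g, Matrix.trace x = 0 := by
    intro g hg x hx
    rw [← trace_p1 x, p_ne g 1 hg x hx, Matrix.trace_zero]
  have trace_skew : ∀ x, s x = -x → Matrix.trace x = 0 := by
    intro x hx
    have hts := trace_s x
    rw [hx, Matrix.trace_neg] at hts
    have h2t : (2 : F) * Matrix.trace x = 0 := by linear_combination -hts
    rcases mul_eq_zero.mp h2t with h' | h'
    · exact absurd h' h2
    · exact h'
  have mem_Km : ∀ x, x ∈ LinearMap.ker (s + LinearMap.id) ↔ s x = -x := by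
    intro x
    rw [LinearMap.mem_ker, LinearMap.add_apply, LinearMap.id_apply, add_eq_zero_iff_eq_neg]
  have mem_Kp : ∀ x, x ∈ LinearMap.ker (s - LinearMap.id) ↔ s x = x := by
    intro x
    rw [LinearMap.mem_ker, LinearMap.sub_apply, LinearMap.id_apply, sub_eq_zero]
  have skew_mem_L : ∀ (g : G) x, x ∈ Rt g → s x = -x → x ∈ Lg g := by
    intro g x hx hsx
    exact Submodule.mem_sup_left ⟨hx, (mem_Km x).mpr hsx⟩
  have sym_mem_L : ∀ (g : G) x, x ∈ Rt (g * h) → s x = x → Matrix.trace x = 0 → x ∈ Lg g := by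
    intro g x hx hsx htr
    refine Submodule.mem_sup_right ⟨⟨hx, (mem_Kp x).mpr hsx⟩, ?_⟩
    split_ifs with hgh
    · exact LinearMap.mem_ker.mpr (by simpa [Matrix.traceLinearMap] using htr)
    · trivial
  -- symmetrization operators
  let sm : Matrix (Fin n) (Fin n) F →ₗ[F] Matrix (Fin n) (Fin n) F :=
    (2⁻¹ : F) • (LinearMap.id - s)
  let sp : Matrix (Fin n) (Fin n) F →ₗ[F] Matrix (Fin n) (Fin n) F :=
    (2⁻¹ : F) • (LinearMap.id + s)
  have sm_apply : ∀ x, sm x = (2⁻¹ : F) • (x - s x) := fun x => rfl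
  have sp_apply : ∀ x, sp x = (2⁻¹ : F) • (x + s x) := fun x => rfl
  have sm_add_sp : ∀ x, sm x + sp x = x := by
    intro x
    rw [sm_apply, sp_apply, ← smul_add]
    have hxx : (x - s x) + (x + s x) = (2 : F) • x := by rw [two_smul]; abel
    rw [hxx, smul_smul, inv_mul_cancel₀ h2, one_smul]
  have s_sm : ∀ x, s (sm x) = -sm x := by
    intro x
    rw [sm_apply, map_smul, map_sub, hinv, ← smul_neg, neg_sub]
  have s_sp : ∀ x, s (sp x) = sp x := by
    intro x
    rw [sp_apply, map_smul, map_add, hinv, add_comm]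
  have sm_mem : ∀ (g : G) x, x ∈ Rt g → sm x ∈ Rt g := fun g x hx =>
    Submodule.smul_mem _ _ (Submodule.sub_mem _ hx (hstar g x hx))
  have sp_mem : ∀ (g : G) x, x ∈ Rt g → sp x ∈ Rt g := fun g x hx =>
    Submodule.smul_mem _ _ (Submodule.add_mem _ hx (hstar g x hx))
  have sm_fix : ∀ x, s x = -x → sm x = x := by
    intro x hx
    rw [sm_apply, hx, sub_neg_eq_add, ← two_smul F, smul_smul, inv_mul_cancel₀ h2, one_smul]
  have sp_fix : ∀ x, s x = x → sp x = x := by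
    intro x hx
    rw [sp_apply, hx, ← two_smul F, smul_smul, inv_mul_cancel₀ h2, one_smul]
  have sm_kill : ∀ x, s x = x → sm x = 0 := by
    intro x hx; rw [sm_apply, hx, sub_self, smul_zero]
  have sp_kill : ∀ x, s x = -x → sp x = 0 := by
    intro x hx; rw [sp_apply, hx, add_neg_cancel, smul_zero]
  -- Part 1
  have Lg_le_sl : ∀ g : G, Lg g ≤ sl := by
    intro g
    refine sup_le ?_ ?_
    · rintro x ⟨hxR, hxK⟩
      exact LinearMap.mem_ker.mpr
        (by simpa [Matrix.traceLinearMap] using trace_skew x ((mem_Km x).mp hxK))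
    · rintro x ⟨⟨hxR, hxK⟩, hxif⟩
      by_cases hgh : g = h
      · rw [if_pos hgh] at hxif; exact hxif
      · rw [if_neg hgh] at hxif
        have hne : g * h ≠ 1 := by
          intro hc
          apply hgh
          rw [eq_inv_of_mul_eq_one_left hc, inv_eq_of_mul_eq_one_left hh2]
        exact LinearMap.mem_ker.mpr
          (by simpa [Matrix.traceLinearMap] using trace_zero _ hne x hxR)
  have part1 : sl = ⨆ g : G, Lg g := by
    apply le_antisymm
    · intro x hx
      have hxt : Matrix.trace x = 0 := by simpa [sl, Matrix.traceLinearMap] using hx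
      rw [← p_sum x]
      refine Submodule.sum_mem _ fun g _ => ?_
      rw [← sm_add_sp (p g x)]
      refine Submodule.add_mem _ ?_ ?_
      · exact Submodule.mem_iSup_of_mem g
          (skew_mem_L g _ (sm_mem g _ (p_mem g x)) (s_sm _))
      · refine Submodule.mem_iSup_of_mem (g * h) (sym_mem_L (g * h) _ ?_ (s_sp _) ?_)
        · rw [mul_assoc, hh2, mul_one]; exact sp_mem g _ (p_mem g x)
        · by_cases hg1 : g = 1
          · subst hg1
            have htr : Matrix.trace (sp (p 1 x)) = Matrix.trace (p 1 x) := by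
              rw [sp_apply, Matrix.trace_smul, Matrix.trace_add, trace_s,
                ← two_smul F, smul_smul, inv_mul_cancel₀ h2, one_smul]
            rw [htr, trace_p1, hxt]
          · exact trace_zero g hg1 _ (sp_mem g _ (p_mem g x))
    · exact iSup_le Lg_le_sl
  -- Part 2
  have part2 : ∀ g : G, Disjoint (Lg g) (⨆ g' ∈ {x : G | x ≠ g}, Lg g') := by
    intro g
    let q : Matrix (Fin n) (Fin n) F →ₗ[F] Matrix (Fin n) (Fin n) F :=
      sm ∘ₗ p g + sp ∘ₗ p (g * h)
    have q_apply : ∀ x, q x = sm (p g x) + sp (p (g * h) x) := fun x => rfl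
    have q_fix : ∀ x ∈ Lg g, q x = x := by
      intro x hx
      rcases Submodule.mem_sup.mp hx with ⟨a, ha, b, hb, rfl⟩
      obtain ⟨haR, haK⟩ := ha
      obtain ⟨⟨hbR, hbK⟩, -⟩ := hb
      have hsa : s a = -a := (mem_Km a).mp haK
      have hsb : s b = b := (mem_Kp b).mp hbK
      have hpg : p g (a + b) = a := by
        rw [map_add, p_same g a haR,
          p_ne (g * h) g (fun hc => hh1 (by rwa [mul_eq_left] at hc)) b hbR, add_zero]
      have hpgh : p (g * h) (a + b) = b := by
        rw [map_add, p_ne g (g * h) (fun hc => hh1 (by rwa [left_eq_mul] at hc)) a haR,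
          p_same _ b hbR, zero_add]
      rw [q_apply, hpg, hpgh, sm_fix a hsa, sp_fix b hsb]
    have q_kill : ∀ g' : G, g' ≠ g → ∀ x ∈ Lg g', q x = 0 := by
      intro g' hg' x hx
      rcases Submodule.mem_sup.mp hx with ⟨a, ha, b, hb, rfl⟩
      obtain ⟨haR, haK⟩ := ha
      obtain ⟨⟨hbR, hbK⟩, -⟩ := hb
      have hsa : s a = -a := (mem_Km a).mp haK
      have hsb : s b = b := (mem_Kp b).mp hbK
      have t1 : sm (p g a) = 0 := by rw [p_ne g' g hg' a haR, map_zero]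
      have t2 : sm (p g b) = 0 := by
        by_cases hc : g' * h = g
        · rw [p_same g b (hc ▸ hbR)]; exact sm_kill b hsb
        · rw [p_ne (g' * h) g hc b hbR, map_zero]
      have t3 : sp (p (g * h) a) = 0 := by
        by_cases hc : g' = g * h
        · rw [p_same (g * h) a (hc ▸ haR)]; exact sp_kill a hsa
        · rw [p_ne g' (g * h) hc a haR, map_zero]
      have t4 : sp (p (g * h) b) = 0 := by
        rw [p_ne (g' * h) (g * h) (fun hc => hg' (mul_right_cancel hc)) b hbR, map_zero]
      rw [q_apply, map_add, map_add, map_add, map_add, t1, t2, t3, t4]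
      simp
    rw [Submodule.disjoint_def]
    intro x hx1 hx2
    have hker : (⨆ g' ∈ {x : G | x ≠ g}, Lg g') ≤ LinearMap.ker q := by
      refine iSup₂_le fun g' hg' => ?_
      intro y hy
      exact LinearMap.mem_ker.mpr (q_kill g' hg' y hy)
    exact (q_fix x hx1).symm.trans (LinearMap.mem_ker.mp (hker hx2))
  -- Part 3
  have bracket : ∀ (k k' : G) (a b : Matrix (Fin n) (Fin n) F),
      a ∈ Rt k → b ∈ Rt k' → a * b - b * a ∈ Rt (k * k') := by
    intro k k' a b ha hb
    refine Submodule.sub_mem _ (hmul k k' a ha b hb) ?_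
    rw [mul_comm k k']
    exact hmul k' k b hb a ha
  have s_brk : ∀ a b : Matrix (Fin n) (Fin n) F,
      s (a * b - b * a) = s b * s a - s a * s b := by
    intro a b; rw [map_sub, hanti, hanti]
  have tr_brk : ∀ a b : Matrix (Fin n) (Fin n) F, Matrix.trace (a * b - b * a) = 0 := by
    intro a b; rw [Matrix.trace_sub, Matrix.trace_mul_comm, sub_self]
  have part3 : ∀ g g' : G, ∀ x ∈ Lg g, ∀ y ∈ Lg g', x * y - y * x ∈ Lg (g * g') := by
    intro g g' x hx y hy
    rcases Submodule.mem_sup.mp hx with ⟨x1, hx1, x2, hx2, rfl⟩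
    rcases Submodule.mem_sup.mp hy with ⟨y1, hy1, y2, hy2, rfl⟩
    obtain ⟨hx1R, hx1K⟩ := hx1
    obtain ⟨⟨hx2R, hx2K⟩, -⟩ := hx2
    obtain ⟨hy1R, hy1K⟩ := hy1
    obtain ⟨⟨hy2R, hy2K⟩, -⟩ := hy2
    have hsx1 := (mem_Km _).mp hx1K
    have hsx2 := (mem_Kp _).mp hx2K
    have hsy1 := (mem_Km _).mp hy1K
    have hsy2 := (mem_Kp _).mp hy2K
    have expand : (x1 + x2) * (y1 + y2) - (y1 + y2) * (x1 + x2)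
        = (x1 * y1 - y1 * x1) + ((x1 * y2 - y2 * x1) +
            ((x2 * y1 - y1 * x2) + (x2 * y2 - y2 * x2))) := by
      noncomm_ring
    rw [expand]
    refine Submodule.add_mem _ ?_ (Submodule.add_mem _ ?_ (Submodule.add_mem _ ?_ ?_))
    · refine skew_mem_L (g * g') _ (bracket g g' _ _ hx1R hy1R) ?_
      rw [s_brk, hsx1, hsy1]
      simp only [neg_mul, mul_neg, neg_neg]
      abel
    · refine sym_mem_L (g * g') _ ?_ ?_ (tr_brk _ _)
      · have hb := bracket g (g' * h) _ _ hx1R hy2R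
        rwa [← mul_assoc] at hb
      · rw [s_brk, hsx1, hsy2]
        simp only [neg_mul, mul_neg, neg_neg]
        abel
    · refine sym_mem_L (g * g') _ ?_ ?_ (tr_brk _ _)
      · have hb := bracket (g * h) g' _ _ hx2R hy1R
        rwa [show g * h * g' = g * g' * h by rw [mul_assoc, mul_comm h g', ← mul_assoc]] at hb
      · rw [s_brk, hsx2, hsy1]
        simp only [neg_mul, mul_neg, neg_neg]
        abel
    · refine skew_mem_L (g * g') _ ?_ ?_
      · have hb := bracket (g * h) (g' * h) _ _ hx2R hy2R
        rwa [show g * h * (g' * h) = g * g' by rw [mul_mul_mul_comm, hh2, mul_one]] at hb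
      · rw [s_brk, hsx2, hsy2]
        abel
  exact ⟨part1, part2, part3⟩
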